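/- Let Π and Π′ be two outside decompositions of an edgewise connected skew diagram λ/μ. If for every content c the boxes of the diagonal of content c of λ/μ go up in Π if and only if they go up in Π′, then Π = Π′; that is, an outside decomposition is uniquely determined by the directions of the diagonals of λ/μ. -/
import Mathlib


noncomputable section

/-- A box in the plane: `(row, column)`, rows increasing downward (English notation). -/
abbrev Box : Type := ℤ × ℤ

/-- The content of a box `(i, j)` is `j - i`. -/
def boxContent (b : Box) : ℤ := b.2 - b.1

/-- An integer partition, indexed from `1` (the value `part 0` is irrelevant). -/
structure Partition' where
  part : ℕ → ℕ
  antitone : ∀ ⦃i j : ℕ⦄, i ≤ j → part j ≤ part i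
  eventually_zero : ∃ N : ℕ, ∀ i : ℕ, N ≤ i → part i = 0

/-- The skew diagram `λ/μ`: boxes `(i, j)` with `i ≥ 1` and `μ_i < j ≤ λ_i`. -/
def skewCells (lam mu : Partition') : Set Box :=
  {b : Box | 1 ≤ b.1 ∧ (mu.part b.1.toNat : ℤ) < b.2 ∧ b.2 ≤ (lam.part b.1.toNat : ℤ)}

/-- `D` is the set of boxes of a skew diagram `λ/μ` for some partitions `μ ⊆ λ`. -/
def IsSkewShape (D : Set Box) : Prop :=
  ∃ lam mu : Partition', (∀ i, mu.part i ≤ lam.part i) ∧ D = skewCells lam mu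

/-- Translate a set of boxes by a vector `v`. -/
def boxTranslate (v : Box) (D : Set Box) : Set Box := (fun b => b + v) '' D

/-- `D` is a translate of a skew diagram. -/
def IsSkewLike (D : Set Box) : Prop := ∃ v : Box, IsSkewShape (boxTranslate v D)

/-- Two boxes share a common edge. -/
def boxAdj (a b : Box) : Prop :=
  (a.1 = b.1 ∧ (a.2 = b.2 + 1 ∨ b.2 = a.2 + 1)) ∨
  (a.2 = b.2 ∧ (a.1 = b.1 + 1 ∨ b.1 = a.1 + 1))

/-- Any two boxes of `D` are joined by a path of boxes of `D` in which consecutive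
boxes share a common edge. -/
def EdgewiseConnected (D : Set Box) : Prop :=
  ∀ a ∈ D, ∀ b ∈ D, Relation.ReflTransGen (fun x y => x ∈ D ∧ y ∈ D ∧ boxAdj x y) a b

/-- `D` contains no `2 × 2` block of boxes. -/
def NoTwoByTwo (D : Set Box) : Prop :=
  ∀ b : Box, ¬(b ∈ D ∧ (b.1, b.2 + 1) ∈ D ∧ (b.1 + 1, b.2) ∈ D ∧ (b.1 + 1, b.2 + 1) ∈ D)

/-- A border strip (ribbon): a nonempty edgewise connected skew diagram (up to translation)
containing no `2 × 2` block of boxes. -/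
def IsBorderStrip (B : Set Box) : Prop :=
  B.Nonempty ∧ IsSkewLike B ∧ EdgewiseConnected B ∧ NoTwoByTwo B

/-- `b` is the starting box (lower-left end) of `B`: no box of `B` directly to its left
nor directly below it. -/
def IsStartBox (B : Set Box) (b : Box) : Prop :=
  b ∈ B ∧ (b.1, b.2 - 1) ∉ B ∧ (b.1 + 1, b.2) ∉ B

/-- `b` is the ending box (upper-right end) of `B`: no box of `B` directly above it
nor directly to its right. -/
def IsEndBox (B : Set Box) (b : Box) : Prop :=
  b ∈ B ∧ (b.1 - 1, b.2) ∉ B ∧ (b.1, b.2 + 1) ∉ B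

/-- The strip `B` has starting box of content `p` and ending box of content `q`. -/
def HasPQ (B : Set Box) (p q : ℤ) : Prop :=
  (∃ b : Box, IsStartBox B b ∧ boxContent b = p) ∧
  (∃ b : Box, IsEndBox B b ∧ boxContent b = q)

/-- An outside decomposition of `D`: a partition of the boxes of `D` into pairwise disjoint
border strips, each strip having its starting box on the left or bottom perimeter of `D` and
its ending box on the right or top perimeter of `D`. -/
def IsOutsideDecomposition (D : Set Box) (P : Set (Set Box)) : Prop :=
  (∀ θ ∈ P, IsBorderStrip θ ∧ θ ⊆ D) ∧
  (∀ b ∈ D, ∃! θ : Set Box, θ ∈ P ∧ b ∈ θ) ∧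
  (∀ θ ∈ P, ∀ b : Box, IsStartBox θ b → ((b.1, b.2 - 1) ∉ D ∨ (b.1 + 1, b.2) ∉ D)) ∧
  (∀ θ ∈ P, ∀ b : Box, IsEndBox θ b → ((b.1 - 1, b.2) ∉ D ∨ (b.1, b.2 + 1) ∉ D))

/-- The box `b` of `D` goes up in the outside decomposition `P`: in the strip of `P`
containing it, the next box is directly above it; an ending box goes up when no box of `D`
lies directly above it. -/
def GoesUp (D : Set Box) (P : Set (Set Box)) (b : Box) : Prop :=
  ∃ θ ∈ P, b ∈ θ ∧ ((b.1 - 1, b.2) ∈ θ ∨ (IsEndBox θ b ∧ (b.1 - 1, b.2) ∉ D))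

/-- The box `b` of `D` goes right in the outside decomposition `P`: in the strip of `P`
containing it, the next box is directly to its right; an ending box goes right when some box
of `D` lies directly above it. -/
def GoesRight (D : Set Box) (P : Set (Set Box)) (b : Box) : Prop :=
  ∃ θ ∈ P, b ∈ θ ∧ ((b.1, b.2 + 1) ∈ θ ∨ (IsEndBox θ b ∧ (b.1 - 1, b.2) ∈ D))

/-- `T` is a cutting strip of the outside decomposition `P` of `D`: a border strip whose
boxes are labeled by the contents of `D` (each content appearing once), in which the box
labeled `c` goes up or goes right according as the boxes of the diagonal of content `c`
of `D` go up or go right in `P`. -/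
def IsCuttingStripOf (D : Set Box) (P : Set (Set Box)) (T : Set Box) : Prop :=
  IsBorderStrip T ∧ boxContent '' T = boxContent '' D ∧
  ∀ b ∈ T, ∀ c ∈ D, boxContent c = boxContent b →
    (((b.1 - 1, b.2) ∈ T → GoesUp D P c) ∧ ((b.1, b.2 + 1) ∈ T → GoesRight D P c))

/-- The segment `φ[p, q]` of a strip `T`: its boxes of content between `p` and `q`. -/
def stripSegment (T : Set Box) (p q : ℤ) : Set Box :=
  {b ∈ T | p ≤ boxContent b ∧ boxContent b ≤ q}

/-- The box of content `c` of the strip `T` goes up (the next box is directly above it). -/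
def StripGoesUpAt (T : Set Box) (c : ℤ) : Prop :=
  ∃ b ∈ T, boxContent b = c ∧ (b.1 - 1, b.2) ∈ T

/-- The box of content `c` of the strip `T` goes right (the next box is directly right of it). -/
def StripGoesRightAt (T : Set Box) (c : ℤ) : Prop :=
  ∃ b ∈ T, boxContent b = c ∧ (b.1, b.2 + 1) ∈ T

/-- `T'` is obtained from the strip `T` by reversing the direction (up versus right) of the
box labeled `i`, keeping the directions of all other boxes. -/
def IsTwist (i : ℤ) (T T' : Set Box) : Prop :=
  boxContent '' T' = boxContent '' T ∧
  (∀ c : ℤ, c ≠ i → (StripGoesUpAt T c ↔ StripGoesUpAt T' c)) ∧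
  (StripGoesUpAt T i ↔ StripGoesRightAt T' i)

/-- The inversion number of an outside decomposition: the number of ordered pairs of
strips `(θ₁, θ₂)` with `p(θ₁) > p(θ₂)` and `q(θ₁) < q(θ₂)`. -/
def invOD (P : Set (Set Box)) : ℕ :=
  {θθ : Set Box × Set Box | θθ.1 ∈ P ∧ θθ.2 ∈ P ∧
    ∃ p₁ q₁ p₂ q₂ : ℤ, HasPQ θθ.1 p₁ q₁ ∧ HasPQ θθ.2 p₂ q₂ ∧ p₂ < p₁ ∧ q₁ < q₂}.ncard

/-- A semistandard Young tableau of shape `D`: entries (variable indices) weakly increase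
along rows and strictly increase down columns; entries outside `D` are normalized to `0`. -/
def IsSSYT (D : Set Box) (T : Box → ℕ) : Prop :=
  (∀ b ∈ D, (b.1, b.2 + 1) ∈ D → T b ≤ T (b.1, b.2 + 1)) ∧
  (∀ b ∈ D, (b.1 + 1, b.2) ∈ D → T b < T (b.1 + 1, b.2)) ∧
  (∀ b : Box, b ∉ D → T b = 0)

/-- The skew Schur function of a skew diagram `D`, as a formal power series in the
variables `x_n` (`n : ℕ`): the coefficient of a monomial `μ` is the number of semistandard
Young tableaux of shape `D` using each variable `n` exactly `μ n` times. -/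
def schur (D : Set Box) : MvPowerSeries ℕ ℤ :=
  fun μ => ({T : Box → ℕ | IsSSYT D T ∧ ∀ n : ℕ, μ n = {b ∈ D | T b = n}.ncard}.ncard : ℤ)

/-- `b` is the upper-right corner box of `D`: the rightmost box of the top row. -/
def IsUpperRightCorner (D : Set Box) (b : Box) : Prop :=
  b ∈ D ∧ (∀ c ∈ D, b.1 ≤ c.1) ∧ ∀ c ∈ D, c.1 = b.1 → c.2 ≤ b.2

/-- `b` is the lower-left corner box of `D`: the leftmost box of the bottom row. -/
def IsLowerLeftCorner (D : Set Box) (b : Box) : Prop :=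
  b ∈ D ∧ (∀ c ∈ D, c.1 ≤ b.1) ∧ ∀ c ∈ D, c.1 = b.1 → b.2 ≤ c.2

/-- The block (edgewise connected component) of `D` containing the box `a`. -/
def blockOf (D : Set Box) (a : Box) : Set Box :=
  {b : Box | Relation.ReflTransGen (fun x y => x ∈ D ∧ y ∈ D ∧ boxAdj x y) a b}

/-- The complete homogeneous symmetric function `h_r` (`h_0 = 1`, `h_r = 0` for `r < 0`):
the sum of all monomials of degree `r`. -/
def hSym (r : ℤ) : MvPowerSeries ℕ ℤ :=
  fun μ => if ((μ.sum fun _ e => e : ℕ) : ℤ) = r then 1 else 0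

/-- The elementary symmetric function `e_r` (`e_0 = 1`, `e_r = 0` for `r < 0`):
the sum of all squarefree monomials of degree `r`. -/
def eSym (r : ℤ) : MvPowerSeries ℕ ℤ :=
  fun μ => if (∀ n ∈ μ.support, μ n = 1) ∧ ((μ.sum fun _ e => e : ℕ) : ℤ) = r then 1 else 0

/-- The `j`-th part (`j ≥ 1`) of the conjugate partition: the number of indices `i ≥ 1`
with `λ_i ≥ j`. -/
def conjPart (lam : Partition') (j : ℕ) : ℕ := {i : ℕ | 1 ≤ i ∧ j ≤ lam.part i}.ncard

/-- The order on the supersymmetric alphabet `x_0 < x_1 < ⋯ < y_0 < y_1 < ⋯`,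
with `Sum.inl n` representing `x_n` and `Sum.inr n` representing `y_n`. -/
def entryLE : ℕ ⊕ ℕ → ℕ ⊕ ℕ → Prop
  | Sum.inl a, Sum.inl b => a ≤ b
  | Sum.inl _, Sum.inr _ => True
  | Sum.inr _, Sum.inl _ => False
  | Sum.inr a, Sum.inr b => a ≤ b

/-- A super tableau of shape `D`: rows and columns weakly increase, the `x`-symbols
strictly increase down columns, the `y`-symbols strictly increase along rows; entries
outside `D` are normalized to `Sum.inl 0`. -/
def IsSuperSSYT (D : Set Box) (T : Box → ℕ ⊕ ℕ) : Prop :=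
  (∀ b ∈ D, (b.1, b.2 + 1) ∈ D → entryLE (T b) (T (b.1, b.2 + 1))) ∧
  (∀ b ∈ D, (b.1 + 1, b.2) ∈ D → entryLE (T b) (T (b.1 + 1, b.2))) ∧
  (∀ b ∈ D, (b.1 + 1, b.2) ∈ D →
    ∀ a c : ℕ, T b = Sum.inl a → T (b.1 + 1, b.2) = Sum.inl c → a < c) ∧
  (∀ b ∈ D, (b.1, b.2 + 1) ∈ D →
    ∀ a c : ℕ, T b = Sum.inr a → T (b.1, b.2 + 1) = Sum.inr c → a < c) ∧
  (∀ b : Box, b ∉ D → T b = Sum.inl 0)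

/-- The supersymmetric skew Schur function `s_D(X, Y)`, as a formal power series in the
variables `x_n, y_n`: the coefficient of a monomial `μ` is the number of super tableaux
of shape `D` using each symbol `v` exactly `μ v` times. -/
def superSchur (D : Set Box) : MvPowerSeries (ℕ ⊕ ℕ) ℤ :=
  fun μ =>
    ({T : Box → ℕ ⊕ ℕ | IsSuperSSYT D T ∧
        ∀ v : ℕ ⊕ ℕ, μ v = {b ∈ D | T b = v}.ncard}.ncard : ℤ)

/-! ### Auxiliary lemmas -/

lemma mem_skewCells {lam mu : Partition'} {i j : ℤ} :
    (i, j) ∈ skewCells lam mu ↔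
      1 ≤ i ∧ (mu.part i.toNat : ℤ) < j ∧ j ≤ (lam.part i.toNat : ℤ) :=
  Iff.rfl

/-- In a skew shape, two consecutive diagonal boxes force the whole 2×2 block. -/
lemma skewShape_closure {D : Set Box} (hD : IsSkewShape D) {i j : ℤ}
    (h1 : (i, j) ∈ D) (h2 : (i + 1, j + 1) ∈ D) :
    (i, j + 1) ∈ D ∧ (i + 1, j) ∈ D := by
  obtain ⟨lam, mu, -, rfl⟩ := hD
  obtain ⟨hi1, hmu1, hlam1⟩ := mem_skewCells.mp h1
  obtain ⟨hi2, hmu2, hlam2⟩ := mem_skewCells.mp h2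
  have ht : (i + 1).toNat = i.toNat + 1 := by omega
  rw [ht] at hmu2 hlam2
  have hmu' : (mu.part (i.toNat + 1) : ℤ) ≤ (mu.part i.toNat : ℤ) :=
    Nat.cast_le.mpr (mu.antitone (Nat.le_succ _))
  have hlam' : (lam.part (i.toNat + 1) : ℤ) ≤ (lam.part i.toNat : ℤ) :=
    Nat.cast_le.mpr (lam.antitone (Nat.le_succ _))
  refine ⟨mem_skewCells.mpr ⟨hi1, by omega, by omega⟩, ?_⟩
  rw [mem_skewCells, ht]
  exact ⟨by omega, by omega, by omega⟩

lemma skewLike_closure {S : Set Box} (hS : IsSkewLike S) {i j : ℤ}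
    (h1 : (i, j) ∈ S) (h2 : (i + 1, j + 1) ∈ S) :
    (i, j + 1) ∈ S ∧ (i + 1, j) ∈ S := by
  obtain ⟨v, hv⟩ := hS
  have key : ∀ a b : ℤ, (a, b) ∈ S ↔ (a + v.1, b + v.2) ∈ boxTranslate v S := by
    intro a b
    constructor
    · intro hmem; exact ⟨(a, b), hmem, rfl⟩
    · rintro ⟨c, hc, hcv⟩
      have hc1 : c.1 + v.1 = a + v.1 := congrArg Prod.fst hcv
      have hc2 : c.2 + v.2 = b + v.2 := congrArg Prod.snd hcv
      have : c = (a, b) := Prod.ext_iff.mpr ⟨by omega, by omega⟩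
      rwa [this] at hc
  have h1' := (key i j).mp h1
  have h2' := (key (i + 1) (j + 1)).mp h2
  have h2'' : ((i + v.1) + 1, (j + v.2) + 1) ∈ boxTranslate v S := by
    rw [show i + v.1 + 1 = i + 1 + v.1 from by ring,
        show j + v.2 + 1 = j + 1 + v.2 from by ring]
    exact h2'
  obtain ⟨ha, hb⟩ := skewShape_closure hv h1' h2''
  constructor
  · rw [key i (j + 1), show j + 1 + v.2 = j + v.2 + 1 from by ring]; exact ha
  · rw [key (i + 1) j, show i + 1 + v.1 = i + v.1 + 1 from by ring]; exact hb

lemma strip_eq {D : Set Box} {P : Set (Set Box)} (hP : IsOutsideDecomposition D P)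
    {θ σ : Set Box} (hθ : θ ∈ P) (hσ : σ ∈ P) {b : Box} (hbθ : b ∈ θ) (hbσ : b ∈ σ) :
    θ = σ := by
  have hbD : b ∈ D := (hP.1 θ hθ).2 hbθ
  obtain ⟨τ, -, hτ⟩ := hP.2.1 b hbD
  rw [hτ θ ⟨hθ, hbθ⟩, hτ σ ⟨hσ, hbσ⟩]

lemma not_up_right {D : Set Box} {P : Set (Set Box)} (hP : IsOutsideDecomposition D P)
    {b : Box} : ¬(GoesUp D P b ∧ GoesRight D P b) := by
  rintro ⟨⟨θ, hθ, hbθ, hu⟩, ⟨σ, hσ, hbσ, hr⟩⟩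
  have hθσ : θ = σ := strip_eq hP hθ hσ hbθ hbσ
  subst hθσ
  rcases hu with hu | ⟨he, hnd⟩
  · rcases hr with hr | ⟨he, hd⟩
    · have hstrip := (hP.1 θ hθ).1
      have hcl := skewLike_closure hstrip.2.1 (i := b.1 - 1) (j := b.2) hu
        (by rw [show b.1 - 1 + 1 = b.1 from by ring]; exact hr)
      refine hstrip.2.2.2 (b.1 - 1, b.2) ⟨hu, hcl.1, hcl.2, ?_⟩
      show (b.1 - 1 + 1, b.2 + 1) ∈ θ
      rw [show b.1 - 1 + 1 = b.1 from by ring]; exact hr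
    · exact he.2.1 hu
  · rcases hr with hr | ⟨he2, hd⟩
    · exact he.2.2 hr
    · exact hnd hd

lemma up_or_right {D : Set Box} {P : Set (Set Box)} (hP : IsOutsideDecomposition D P)
    {b : Box} (hb : b ∈ D) : GoesUp D P b ∨ GoesRight D P b := by
  obtain ⟨θ, ⟨hθ, hbθ⟩, -⟩ := hP.2.1 b hb
  by_cases ha : (b.1 - 1, b.2) ∈ θ
  · exact Or.inl ⟨θ, hθ, hbθ, Or.inl ha⟩
  by_cases hr : (b.1, b.2 + 1) ∈ θ
  · exact Or.inr ⟨θ, hθ, hbθ, Or.inl hr⟩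
  by_cases hu : (b.1 - 1, b.2) ∈ D
  · exact Or.inr ⟨θ, hθ, hbθ, Or.inr ⟨⟨hbθ, ha, hr⟩, hu⟩⟩
  · exact Or.inl ⟨θ, hθ, hbθ, Or.inr ⟨⟨hbθ, ha, hr⟩, hu⟩⟩

/-- Consecutive boxes of a diagonal go in the same direction. -/
lemma step_iff {D : Set Box} {P : Set (Set Box)} (hD : IsSkewShape D)
    (hP : IsOutsideDecomposition D P) {i j : ℤ}
    (h1 : (i, j) ∈ D) (h2 : (i + 1, j + 1) ∈ D) :
    (GoesUp D P (i, j) ↔ GoesUp D P (i + 1, j + 1)) := by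
  have hr : (i, j + 1) ∈ D := (skewShape_closure hD h1 h2).1
  constructor
  · intro hU
    by_contra hU'
    have hR' : GoesRight D P (i + 1, j + 1) := (up_or_right hP h2).resolve_left hU'
    obtain ⟨θr, ⟨hθr, hrθr⟩, -⟩ := hP.2.1 (i, j + 1) hr
    have hbnot : (i, j) ∉ θr := fun hmem =>
      not_up_right hP ⟨hU, ⟨θr, hθr, hmem, Or.inl hrθr⟩⟩
    have hb'not : (i + 1, j + 1) ∉ θr := fun hmem =>
      hU' ⟨θr, hθr, hmem, Or.inl (show (i + 1 - 1, j + 1) ∈ θr by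
        rw [show i + 1 - 1 = i from by ring]; exact hrθr)⟩
    have hstart : IsStartBox θr (i, j + 1) :=
      ⟨hrθr,
       show (i, j + 1 - 1) ∉ θr by
         rw [show j + 1 - 1 = j from by ring]; exact hbnot,
       hb'not⟩
    rcases hP.2.2.1 θr hθr (i, j + 1) hstart with hcon | hcon
    · exact hcon (show (i, j + 1 - 1) ∈ D by
        rw [show j + 1 - 1 = j from by ring]; exact h1)
    · exact hcon h2
  · intro hU'
    by_contra hU
    have hR : GoesRight D P (i, j) := (up_or_right hP h1).resolve_left hU
    obtain ⟨θ, hθ, hbθ, hc⟩ := hR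
    have hrθ : (i, j + 1) ∈ θ := by
      rcases hc with hk | ⟨hend, habove⟩
      · exact hk
      · rcases hP.2.2.2 θ hθ (i, j) hend with hx | hx
        · exact absurd habove hx
        · exact absurd hr hx
    obtain ⟨θ', hθ', hb'θ', hc'⟩ := hU'
    have hrθ' : (i, j + 1) ∈ θ' := by
      rcases hc' with hk | ⟨hend, hnd⟩
      · have hk' : (i + 1 - 1, j + 1) ∈ θ' := hk
        rwa [show i + 1 - 1 = i from by ring] at hk'
      · exact absurd (show (i + 1 - 1, j + 1) ∈ D by
          rw [show i + 1 - 1 = i from by ring]; exact hr) hnd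
    have hθθ' : θ = θ' := strip_eq hP hθ hθ' hrθ hrθ'
    subst hθθ'
    have hstrip := (hP.1 θ hθ).1
    have hcl := skewLike_closure hstrip.2.1 hbθ hb'θ'
    exact hstrip.2.2.2 (i, j) ⟨hbθ, hrθ, hcl.2, hb'θ'⟩

lemma diag_mem {D : Set Box} (hD : IsSkewShape D) {i j : ℤ} {k m : ℕ}
    (h1 : (i, j) ∈ D) (h2 : (i + (k : ℤ), j + (k : ℤ)) ∈ D) (hm : m ≤ k) :
    (i + (m : ℤ), j + (m : ℤ)) ∈ D := by
  obtain ⟨lam, mu, -, rfl⟩ := hD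
  obtain ⟨hi1, hmu1, hlam1⟩ := mem_skewCells.mp h1
  obtain ⟨hi2, hmu2, hlam2⟩ := mem_skewCells.mp h2
  have t1 : (i + (k : ℤ)).toNat = i.toNat + k := by omega
  have t2 : (i + (m : ℤ)).toNat = i.toNat + m := by omega
  rw [t1] at hmu2 hlam2
  rw [mem_skewCells, t2]
  have hmu' : (mu.part (i.toNat + m) : ℤ) ≤ (mu.part i.toNat : ℤ) :=
    Nat.cast_le.mpr (mu.antitone (Nat.le_add_right _ _))
  have hlam' : (lam.part (i.toNat + k) : ℤ) ≤ (lam.part (i.toNat + m) : ℤ) :=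
    Nat.cast_le.mpr (lam.antitone (by omega))
  exact ⟨by omega, by omega, by omega⟩

lemma diag_iff {D : Set Box} {P : Set (Set Box)} (hD : IsSkewShape D)
    (hP : IsOutsideDecomposition D P) :
    ∀ (k : ℕ) (i j : ℤ), (i, j) ∈ D → (i + (k : ℤ), j + (k : ℤ)) ∈ D →
      (GoesUp D P (i, j) ↔ GoesUp D P (i + (k : ℤ), j + (k : ℤ))) := by
  intro k
  induction k with
  | zero => intro i j h1 h2; norm_num
  | succ n ih =>
    intro i j h1 h2
    have hmid : (i + (n : ℤ), j + (n : ℤ)) ∈ D := diag_mem hD h1 h2 (Nat.le_succ n)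
    have hstep : (i + (n : ℤ) + 1, j + (n : ℤ) + 1) ∈ D := by
      rw [show i + (n : ℤ) + 1 = i + ((n + 1 : ℕ) : ℤ) from by push_cast; ring,
          show j + (n : ℤ) + 1 = j + ((n + 1 : ℕ) : ℤ) from by push_cast; ring]
      exact h2
    have e1 := ih i j h1 hmid
    have e2 := step_iff hD hP hmid hstep
    rw [show ((n + 1 : ℕ) : ℤ) = (n : ℤ) + 1 from by push_cast; ring,
        ← add_assoc i (n : ℤ) 1, ← add_assoc j (n : ℤ) 1]
    exact e1.trans e2

/-- All boxes of the same content (diagonal) go in the same direction. -/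
lemma sameContent_iff {D : Set Box} {P : Set (Set Box)} (hD : IsSkewShape D)
    (hP : IsOutsideDecomposition D P) {b b' : Box} (hb : b ∈ D) (hb' : b' ∈ D)
    (hc : boxContent b = boxContent b') : GoesUp D P b ↔ GoesUp D P b' := by
  suffices haux : ∀ b b' : Box, b ∈ D → b' ∈ D → boxContent b = boxContent b' →
      b.1 ≤ b'.1 → (GoesUp D P b ↔ GoesUp D P b') by
    rcases le_total b.1 b'.1 with hle | hle
    · exact haux b b' hb hb' hc hle
    · exact (haux b' b hb' hb hc.symm hle).symm
  clear hb hb' hc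
  intro b b' hb hb' hc hle
  obtain ⟨i, j⟩ := b
  obtain ⟨i', j'⟩ := b'
  have hcc : j - i = j' - i' := hc
  have hle' : i ≤ i' := hle
  obtain ⟨k, hk⟩ : ∃ k : ℕ, (k : ℤ) = i' - i := ⟨(i' - i).toNat, by omega⟩
  have h1 : i' = i + (k : ℤ) := by omega
  have h2 : j' = j + (k : ℤ) := by omega
  subst h1 h2
  exact diag_iff hD hP k i j hb hb'

/-- Transfer of a strip from one outside decomposition to another with the same
directions. -/
lemma strip_subset {D : Set Box} {P P' : Set (Set Box)}
    (hP : IsOutsideDecomposition D P) (hP' : IsOutsideDecomposition D P')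
    (hdir : ∀ b ∈ D, (GoesUp D P b ↔ GoesUp D P' b))
    {θ θ' : Set Box} (hθ : θ ∈ P) (hθ' : θ' ∈ P')
    {b₀ : Box} (hb₀ : b₀ ∈ θ) (hb₀' : b₀ ∈ θ') : θ ⊆ θ' := by
  have hsub : θ ⊆ D := (hP.1 θ hθ).2
  have hdirR : ∀ b ∈ D, GoesRight D P b → GoesRight D P' b := by
    intro b hb hr
    rcases up_or_right hP' hb with hu' | hr'
    · exact absurd ⟨(hdir b hb).mpr hu', hr⟩ (not_up_right hP)
    · exact hr'
  suffices hkey : ∀ y : Box,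
      Relation.ReflTransGen (fun x y => x ∈ θ ∧ y ∈ θ ∧ boxAdj x y) b₀ y → y ∈ θ' by
    intro y hy
    exact hkey y ((hP.1 θ hθ).1.2.2.1 b₀ hb₀ y hy)
  intro y hpath
  induction hpath with
  | refl => exact hb₀'
  | @tail z w hzp hstep ih =>
    obtain ⟨hzθ, hwθ, hadj⟩ := hstep
    have hzD : z ∈ D := hsub hzθ
    have hwD : w ∈ D := hsub hwθ
    rcases hadj with ⟨hrow, hcol | hcol⟩ | ⟨hcol, hrow | hrow⟩
    · -- w is directly left of z : z = (w.1, w.2 + 1)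
      have hz' : z = (w.1, w.2 + 1) := Prod.ext_iff.mpr ⟨hrow, hcol⟩
      have hR : GoesRight D P w :=
        ⟨θ, hθ, hwθ, Or.inl (by rw [← hz']; exact hzθ)⟩
      obtain ⟨σ, hσ, hwσ, hcs⟩ := hdirR w hwD hR
      have hzσ : z ∈ σ := by
        rcases hcs with hk | ⟨hend, hab⟩
        · rw [hz']; exact hk
        · rcases hP'.2.2.2 σ hσ w hend with hx | hx
          · exact absurd hab hx
          · exact absurd (show (w.1, w.2 + 1) ∈ D by rw [← hz']; exact hzD) hx
      have hσθ' : σ = θ' := strip_eq hP' hσ hθ' hzσ ih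
      rw [← hσθ']; exact hwσ
    · -- w is directly right of z : w = (z.1, z.2 + 1)
      have hw' : w = (z.1, z.2 + 1) := Prod.ext_iff.mpr ⟨hrow.symm, hcol⟩
      have hR : GoesRight D P z :=
        ⟨θ, hθ, hzθ, Or.inl (by rw [← hw']; exact hwθ)⟩
      obtain ⟨σ, hσ, hzσ, hcs⟩ := hdirR z hzD hR
      have hσθ' : σ = θ' := strip_eq hP' hσ hθ' hzσ ih
      rcases hcs with hk | ⟨hend, hab⟩
      · rw [hw', ← hσθ']; exact hk
      · rcases hP'.2.2.2 σ hσ z hend with hx | hx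
        · exact absurd hab hx
        · exact absurd (show (z.1, z.2 + 1) ∈ D by rw [← hw']; exact hwD) hx
    · -- w is directly above z : w = (z.1 - 1, z.2)
      have hw' : w = (z.1 - 1, z.2) := Prod.ext_iff.mpr ⟨by omega, hcol.symm⟩
      have hU : GoesUp D P z :=
        ⟨θ, hθ, hzθ, Or.inl (by rw [← hw']; exact hwθ)⟩
      obtain ⟨σ, hσ, hzσ, hcs⟩ := (hdir z hzD).mp hU
      have hσθ' : σ = θ' := strip_eq hP' hσ hθ' hzσ ih
      rcases hcs with hk | ⟨hend, hab⟩
      · rw [hw', ← hσθ']; exact hk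
      · exact absurd (show (z.1 - 1, z.2) ∈ D by rw [← hw']; exact hwD) hab
    · -- w is directly below z : z = (w.1 - 1, w.2)
      have hz' : z = (w.1 - 1, w.2) := Prod.ext_iff.mpr ⟨by omega, hcol⟩
      have hU : GoesUp D P w :=
        ⟨θ, hθ, hwθ, Or.inl (by rw [← hz']; exact hzθ)⟩
      obtain ⟨σ, hσ, hwσ, hcs⟩ := (hdir w hwD).mp hU
      have hzσ : z ∈ σ := by
        rcases hcs with hk | ⟨hend, hab⟩
        · rw [hz']; exact hk
        · exact absurd (show (w.1 - 1, w.2) ∈ D by rw [← hz']; exact hzD) hab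
      have hσθ' : σ = θ' := strip_eq hP' hσ hθ' hzσ ih
      rw [← hσθ']; exact hwσ
/-- An outside decomposition of an edgewise connected skew diagram is
uniquely determined by the directions (up versus right) of the diagonals. -/
theorem outsideDecomposition_determined_by_directions
    (D : Set Box) (hD : IsSkewShape D) (hne : D.Nonempty) (hconn : EdgewiseConnected D)
    (P P' : Set (Set Box))
    (hP : IsOutsideDecomposition D P) (hP' : IsOutsideDecomposition D P')
    (h : ∀ c : ℤ, ((∀ b ∈ D, boxContent b = c → GoesUp D P b) ↔
        (∀ b ∈ D, boxContent b = c → GoesUp D P' b))) :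
    P = P' := by
  have hdir : ∀ b ∈ D, (GoesUp D P b ↔ GoesUp D P' b) := by
    intro b hb
    constructor
    · intro hu
      refine (h (boxContent b)).mp ?_ b hb rfl
      intro c hc hcb
      exact (sameContent_iff hD hP hc hb hcb).mpr hu
    · intro hu
      refine (h (boxContent b)).mpr ?_ b hb rfl
      intro c hc hcb
      exact (sameContent_iff hD hP' hc hb hcb).mpr hu
  have hdir' : ∀ b ∈ D, (GoesUp D P' b ↔ GoesUp D P b) := fun b hb => (hdir b hb).symm
  apply Set.Subset.antisymm
  · intro θ hθ
    obtain ⟨b₀, hb₀⟩ := (hP.1 θ hθ).1.1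
    have hb₀D : b₀ ∈ D := (hP.1 θ hθ).2 hb₀
    obtain ⟨θ', ⟨hθ', hb₀'⟩, -⟩ := hP'.2.1 b₀ hb₀D
    have heq : θ = θ' := Set.Subset.antisymm
      (strip_subset hP hP' hdir hθ hθ' hb₀ hb₀')
      (strip_subset hP' hP hdir' hθ' hθ hb₀' hb₀)
    rw [heq]; exact hθ'
  · intro θ hθ
    obtain ⟨b₀, hb₀⟩ := (hP'.1 θ hθ).1.1
    have hb₀D : b₀ ∈ D := (hP'.1 θ hθ).2 hb₀
    obtain ⟨θ', ⟨hθ', hb₀'⟩, -⟩ := hP.2.1 b₀ hb₀D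
    have heq : θ = θ' := Set.Subset.antisymm
      (strip_subset hP' hP hdir' hθ hθ' hb₀ hb₀')
      (strip_subset hP hP' hdir hθ' hθ hb₀' hb₀)
    rw [heq]; exact hθ'
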